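/- As the natural number δ tends to infinity, the ratio (π − (π/2 + π/3 + π/2^(δ+2))) / log(y_δ + √(y_δ² − 1)), where y_δ = cos(π/2^(δ+2)) / sin(π/3), converges to π/(3·log 3). Moreover, π/(3·log 3) > 0.953. (The numerator is 1/2^(δ+3) times the area of a tile and the denominator is 1/2^(δ+3) times the perimeter of a tile in the regular tiling of the hyperbolic plane by 2^(δ+2)-gons meeting three per vertex; note that log(y + √(y² − 1)) = arcosh y.) -/
import Mathlib


open Real Filter

private theorem log3_lt_aux : Real.log 3 < 1.09864 := by
  have hx : |(1/4 : ℝ)| < 1 := by rw [abs_of_pos] <;> norm_num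
  have habs : |(1/4 : ℝ)| = 1/4 := by rw [abs_of_pos] <;> norm_num
  have z := Real.abs_log_sub_add_sum_range_le hx 7
  have h34 : Real.log (1 - 1/4 : ℝ) = Real.log 3 - 2 * Real.log 2 := by
    have : (1 - 1/4 : ℝ) = 3 / 4 := by norm_num
    rw [this, Real.log_div (by norm_num) (by norm_num),
      show (4:ℝ) = 2^2 by norm_num, Real.log_pow]
    push_cast; ring
  rw [h34, habs] at z
  simp_rw [Finset.sum_range_succ] at z
  norm_num at z
  have h2 := Real.log_two_lt_d9
  rw [abs_le] at z
  nlinarith [z.1, z.2]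

private theorem tendsto_aux : Filter.Tendsto (fun δ : ℕ =>
        (π - (π / 2 + π / 3 + π / 2 ^ (δ + 2))) /
          Real.log (Real.cos (π / 2 ^ (δ + 2)) / Real.sin (π / 3) +
            Real.sqrt ((Real.cos (π / 2 ^ (δ + 2)) / Real.sin (π / 3)) ^ 2 - 1)))
      Filter.atTop (nhds (π / (3 * Real.log 3))) := by
  have ht : Tendsto (fun δ : ℕ => π / 2 ^ (δ + 2)) atTop (nhds 0) := by
    apply Tendsto.div_atTop tendsto_const_nhds
    exact (tendsto_pow_atTop_atTop_of_one_lt (by norm_num : (1:ℝ) < 2)).comp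
      (tendsto_add_atTop_nat 2)
  have hsin : Real.sin (π/3) = Real.sqrt 3 / 2 := Real.sin_pi_div_three
  have hval : Real.log (Real.cos 0 / Real.sin (π/3) +
      Real.sqrt ((Real.cos 0 / Real.sin (π/3)) ^ 2 - 1)) = Real.log 3 / 2 := by
    rw [Real.cos_zero, hsin]
    have hs : (0:ℝ) < Real.sqrt 3 := Real.sqrt_pos.2 (by norm_num)
    have hsq : Real.sqrt 3 ^ 2 = 3 := Real.sq_sqrt (by norm_num)
    have h1 : (1 / (Real.sqrt 3 / 2)) ^ 2 - 1 = (1 / Real.sqrt 3) ^ 2 := by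
      field_simp
      nlinarith [hsq]
    rw [h1, Real.sqrt_sq (by positivity)]
    have h2 : 1 / (Real.sqrt 3 / 2) + 1 / Real.sqrt 3 = Real.sqrt 3 := by
      field_simp
      nlinarith [hsq]
    rw [h2, Real.log_sqrt (by norm_num)]
  have hinner : Continuous (fun x : ℝ => Real.cos x / Real.sin (π/3) +
      Real.sqrt ((Real.cos x / Real.sin (π/3)) ^ 2 - 1)) := by fun_prop
  have hcont : ContinuousAt (fun x : ℝ => Real.log (Real.cos x / Real.sin (π/3) +
      Real.sqrt ((Real.cos x / Real.sin (π/3)) ^ 2 - 1))) 0 := by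
    apply hinner.continuousAt.log
    simp only [Real.cos_zero, hsin]
    positivity
  have hden : Tendsto (fun δ : ℕ => Real.log (Real.cos (π / 2 ^ (δ + 2)) / Real.sin (π/3) +
      Real.sqrt ((Real.cos (π / 2 ^ (δ + 2)) / Real.sin (π/3)) ^ 2 - 1))) atTop
      (nhds (Real.log 3 / 2)) := by
    rw [← hval]
    exact (hcont.tendsto).comp ht
  have hnum : Tendsto (fun δ : ℕ => π - (π / 2 + π / 3 + π / 2 ^ (δ + 2))) atTop
      (nhds (π / 6)) := by
    have h := tendsto_const_nhds (x := π) (f := atTop (α := ℕ)) |>.sub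
      ((tendsto_const_nhds (x := π/2 + π/3) (f := atTop (α := ℕ))).add ht)
    have he : π - (π/2 + π/3 + 0) = π/6 := by ring
    rw [← he]
    exact h
  have hne : Real.log 3 / 2 ≠ 0 := by
    have : (0:ℝ) < Real.log 3 := Real.log_pos (by norm_num)
    positivity
  have hfin := hnum.div hden hne
  have heq : π / 6 / (Real.log 3 / 2) = π / (3 * Real.log 3) := by
    have h3 : (0:ℝ) < Real.log 3 := Real.log_pos (by norm_num)
    field_simp
    ring
  rwa [heq] at hfin

/-- With `y δ = cos(π/2^(δ+2)) / sin(π/3)`, the ratio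
`(π − (π/2 + π/3 + π/2^(δ+2))) / log (y δ + √(y δ² − 1))` tends to `π / (3 log 3)` as
`δ → ∞`, and `π / (3 log 3) > 0.953`. -/
theorem stmt_6 :
    Filter.Tendsto (fun δ : ℕ =>
        (π - (π / 2 + π / 3 + π / 2 ^ (δ + 2))) /
          Real.log (Real.cos (π / 2 ^ (δ + 2)) / Real.sin (π / 3) +
            Real.sqrt ((Real.cos (π / 2 ^ (δ + 2)) / Real.sin (π / 3)) ^ 2 - 1)))
      Filter.atTop (nhds (π / (3 * Real.log 3))) ∧
    0.953 < π / (3 * Real.log 3) := by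
  refine ⟨tendsto_aux, ?_⟩
  have h3 : (0:ℝ) < Real.log 3 := Real.log_pos (by norm_num)
  rw [lt_div_iff₀ (by positivity)]
  nlinarith [Real.pi_gt_d6, log3_lt_aux]
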